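/- For λ ≥ 0 and pairwise distinct x_1,…,x_{k+1} ∈ (0,∞), the k-th divided difference of the function x ↦ (x−α)^k / ((x+λ)(α+λ)^k) (with fixed α ∈ (0,∞)) at the points x_1,…,x_{k+1} equals 1 / ∏_{i=1}^{k+1} (x_i + λ). -/

import Mathlib

noncomputable def divDiff (f : ℝ → ℝ) : (k : ℕ) → (Fin (k + 1) → ℝ) → ℝ
  | 0, x => f (x 0)
  | k + 1, x =>
      (divDiff f k (fun i => x i.castSucc) - divDiff f k (fun i => x i.succ)) /
        (x 0 - x (Fin.last (k + 1)))

lemma divDiff_congr (f g : ℝ → ℝ) (k : ℕ) (x : Fin (k + 1) → ℝ)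
    (h : ∀ i, f (x i) = g (x i)) : divDiff f k x = divDiff g k x := by
  induction k with
  | zero => simpa [divDiff] using h 0
  | succ k ih =>
      simp only [divDiff]
      rw [ih _ (fun i => h i.castSucc), ih _ (fun i => h i.succ)]

lemma divDiff_sub (f g : ℝ → ℝ) (k : ℕ) (x : Fin (k + 1) → ℝ) :
    divDiff (fun t => f t - g t) k x = divDiff f k x - divDiff g k x := by
  induction k with
  | zero => simp [divDiff]
  | succ k ih => simp only [divDiff, ih]; ring

lemma divDiff_smul (c : ℝ) (f : ℝ → ℝ) (k : ℕ) (x : Fin (k + 1) → ℝ) :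
    divDiff (fun t => c * f t) k x = c * divDiff f k x := by
  induction k with
  | zero => simp [divDiff]
  | succ k ih => simp only [divDiff, ih]; ring

lemma divDiff_const (c : ℝ) (k : ℕ) (x : Fin (k + 2) → ℝ) :
    divDiff (fun _ => c) (k + 1) x = 0 := by
  induction k with
  | zero => simp [divDiff]
  | succ k ih =>
      conv_lhs => rw [divDiff]
      rw [ih, ih]; simp

lemma divDiff_linear_mul (α : ℝ) (g : ℝ → ℝ) :
    ∀ (k : ℕ) (x : Fin (k + 2) → ℝ), Function.Injective x →
    divDiff (fun t => (t - α) * g t) (k + 1) x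
      = (x 0 - α) * divDiff g (k + 1) x + divDiff g k (fun i => x i.succ) := by
  intro k
  induction k with
  | zero =>
      intro x hx
      have h01 : x 0 - x 1 ≠ 0 := sub_ne_zero.mpr (fun h => by simpa using hx h)
      have hl : (Fin.last 1 : Fin 2) = 1 := rfl
      simp only [divDiff, hl, Fin.castSucc_zero, Fin.succ_zero_eq_one]
      field_simp
      ring
  | succ k ih =>
      intro x hx
      have hfi : Function.Injective (fun i : Fin (k + 2) => x i.castSucc) :=
        hx.comp (Fin.castSucc_injective _)
      have hti : Function.Injective (fun i : Fin (k + 2) => x i.succ) :=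
        hx.comp (Fin.succ_injective _)
      have hmid : (fun i : Fin (k + 1) => x i.succ.castSucc)
          = (fun i : Fin (k + 1) => x i.castSucc.succ) := by
        funext i; rw [Fin.succ_castSucc]
      have h0L : x 0 - x (Fin.last (k + 2)) ≠ 0 :=
        sub_ne_zero.mpr (fun h => by simpa [Fin.ext_iff] using hx h)
      have h1L : x 1 - x (Fin.last (k + 2)) ≠ 0 :=
        sub_ne_zero.mpr (fun h => by simpa [Fin.ext_iff] using hx h)
      have hsl : (Fin.last (k + 1)).succ = Fin.last (k + 2) := rfl
      set C1 := divDiff g k (fun i : Fin (k + 1) => x i.castSucc.succ) with hC1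
      set C2 := divDiff g k (fun i : Fin (k + 1) => x i.succ.succ) with hC2
      set A := divDiff g (k + 1) (fun i : Fin (k + 2) => x i.castSucc) with hA
      have hB : divDiff g (k + 1) (fun i : Fin (k + 2) => x i.succ)
          = (C1 - C2) / (x 1 - x (Fin.last (k + 2))) := by
        conv_lhs => rw [divDiff]
        simp only [hmid, hsl, Fin.succ_zero_eq_one, hC1, hC2]
      conv_lhs => rw [divDiff]
      rw [ih _ hfi, ih _ hti]
      conv_rhs => rw [divDiff]
      rw [hB]
      simp only [hmid, Fin.castSucc_zero, Fin.succ_zero_eq_one, hsl, ← hC1, ← hC2, ← hA]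
      field_simp
      ring

lemma divDiff_pow (α : ℝ) (m : ℕ) :
    (∀ (k : ℕ) (x : Fin (k + 1) → ℝ), Function.Injective x → m < k →
      divDiff (fun t => (t - α) ^ m) k x = 0) ∧
    (∀ (x : Fin (m + 1) → ℝ), Function.Injective x →
      divDiff (fun t => (t - α) ^ m) m x = 1) := by
  induction m with
  | zero =>
      constructor
      · intro k x hx hk
        obtain ⟨j, rfl⟩ : ∃ j, k = j + 1 := ⟨k - 1, by omega⟩
        have h1 : divDiff (fun t : ℝ => (t - α) ^ 0) (j + 1) x
            = divDiff (fun _ : ℝ => (1 : ℝ)) (j + 1) x := by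
          apply divDiff_congr; intro i; simp
        rw [h1, divDiff_const]
      · intro x hx
        simp [divDiff]
  | succ m ih =>
      obtain ⟨ih0, ih1⟩ := ih
      have key : ∀ (k : ℕ) (x : Fin (k + 2) → ℝ), Function.Injective x →
          divDiff (fun t => (t - α) ^ (m + 1)) (k + 1) x
            = (x 0 - α) * divDiff (fun t => (t - α) ^ m) (k + 1) x
              + divDiff (fun t => (t - α) ^ m) k (fun i => x i.succ) := by
        intro k x hx
        have h1 : divDiff (fun t => (t - α) ^ (m + 1)) (k + 1) x
            = divDiff (fun t => (t - α) * (t - α) ^ m) (k + 1) x := by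
          apply divDiff_congr; intro i; ring
        rw [h1, divDiff_linear_mul _ _ _ _ hx]
      constructor
      · intro k x hx hk
        obtain ⟨j, rfl⟩ : ∃ j, k = j + 1 := ⟨k - 1, by omega⟩
        have hti : Function.Injective (fun i : Fin (j + 1) => x i.succ) :=
          fun a b h => Fin.succ_injective _ (hx h)
        rw [key j x hx, ih0 _ _ hx (by omega), ih0 _ _ hti (by omega)]
        ring
      · intro x hx
        have hti : Function.Injective (fun i : Fin (m + 1) => x i.succ) :=
          fun a b h => Fin.succ_injective _ (hx h)
        rw [key m x hx, ih0 _ _ hx (by omega), ih1 _ hti]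
        ring

theorem divDiff_kernel_zero_infty (k : ℕ) (lam : ℝ) (hlam : 0 ≤ lam)
    (α : ℝ) (hα : α ∈ Set.Ioi (0 : ℝ))
    (x : Fin (k + 1) → ℝ) (hx : Function.Injective x)
    (hx' : ∀ i, x i ∈ Set.Ioi (0 : ℝ)) :
    divDiff (fun t => (t - α) ^ k / ((t + lam) * (α + lam) ^ k)) k x
      = 1 / ∏ i, (x i + lam) := by
  have hαl : α + lam ≠ 0 := by have := hα.out; positivity
  induction k with
  | zero =>
      have h0 : x 0 + lam ≠ 0 := by have := (hx' 0).out; positivity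
      simp [divDiff, h0]
  | succ k ih =>
      have hxl : ∀ i, x i + lam ≠ 0 := fun i => by have := (hx' i).out; positivity
      have h_eq : ∀ i, (x i - α) ^ (k + 1) / ((x i + lam) * (α + lam) ^ (k + 1))
          = ((α + lam) ^ (k + 1))⁻¹ * (x i - α) ^ k
              - (x i - α) ^ k / ((x i + lam) * (α + lam) ^ k) := by
        intro i
        have h1 := hxl i
        field_simp
        ring
      rw [divDiff_congr _ (fun t => ((α + lam) ^ (k + 1))⁻¹ * (t - α) ^ k
            - (t - α) ^ k / ((t + lam) * (α + lam) ^ k)) _ x h_eq,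
        divDiff_sub, divDiff_smul,
        (divDiff_pow α k).1 (k + 1) x hx (by omega)]
      have hfi : Function.Injective (fun i : Fin (k + 1) => x i.castSucc) :=
        fun a b h => Fin.castSucc_injective _ (hx h)
      have hti : Function.Injective (fun i : Fin (k + 1) => x i.succ) :=
        fun a b h => Fin.succ_injective _ (hx h)
      conv_lhs => rw [divDiff]
      rw [ih _ hfi (fun i => hx' i.castSucc), ih _ hti (fun i => hx' i.succ)]
      have hPf : (0:ℝ) < ∏ i : Fin (k + 1), (x i.castSucc + lam) :=
        Finset.prod_pos (fun i _ => by have := (hx' i.castSucc).out; linarith)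
      have hPt : (0:ℝ) < ∏ i : Fin (k + 1), (x i.succ + lam) :=
        Finset.prod_pos (fun i _ => by have := (hx' i.succ).out; linarith)
      have hP1 : ∏ i : Fin (k + 2), (x i + lam)
          = (∏ i : Fin (k + 1), (x i.castSucc + lam)) * (x (Fin.last (k + 1)) + lam) :=
        Fin.prod_univ_castSucc _
      have hP2 : ∏ i : Fin (k + 2), (x i + lam)
          = (x 0 + lam) * ∏ i : Fin (k + 1), (x i.succ + lam) :=
        Fin.prod_univ_succ _
      have hrel : (∏ i : Fin (k + 1), (x i.castSucc + lam)) * (x (Fin.last (k + 1)) + lam)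
          = (x 0 + lam) * ∏ i : Fin (k + 1), (x i.succ + lam) := by rw [← hP1, hP2]
      have h0L : x 0 - x (Fin.last (k + 1)) ≠ 0 :=
        sub_ne_zero.mpr (fun h => by simpa [Fin.ext_iff] using hx h)
      rw [hP1]
      set Pf := ∏ i : Fin (k + 1), (x i.castSucc + lam)
      set Pt := ∏ i : Fin (k + 1), (x i.succ + lam)
      have hL : x (Fin.last (k + 1)) + lam ≠ 0 := hxl _
      have h0 : x 0 + lam ≠ 0 := hxl _
      field_simp
      linear_combination (α + lam) ^ (k + 1) * hrel
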